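/- arXiv:1201.0330 — 6 statements merged into one kernel-verified Lean document; each statement's English description precedes it below -/
import Mathlib

section
/- Let $I$ be a finite index set, $\alpha_i \geq 0$ with $\sum_{i\in I}\alpha_i = 1$, and $f: I \to [0,1]$. Suppose $J \subseteq I$ satisfies $\left(\sum_{j\in J}\alpha_j f(j)\right)/\left(\sum_{j\in J}\alpha_j\right) = \sum_{i\in I}\alpha_i f(i) + \eta$ for some $\eta \in [-1,1]$ (in particular $\sum_{j\in J}\alpha_j > 0$). Then $\sum_{i\in I}\alpha_i f(i)^2 \geq \left(\sum_{i\in I}\alpha_i f(i)\right)^2 + \left(\sum_{j\in J}\alpha_j\right)\eta^2$. -/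
/-- Defect version of the Cauchy-Schwarz inequality for weighted averages. -/
theorem defect_cauchy_schwarz {I : Type*} [Fintype I] (α : I → ℝ) (f : I → ℝ)
    (hα : ∀ i, 0 ≤ α i) (hsum : ∑ i, α i = 1)
    (hf : ∀ i, f i ∈ Set.Icc (0 : ℝ) 1)
    (J : Finset I) (η : ℝ) (hη : η ∈ Set.Icc (-1 : ℝ) 1)
    (hJpos : 0 < ∑ j ∈ J, α j)
    (hdev : (∑ j ∈ J, α j * f j) / (∑ j ∈ J, α j) = (∑ i, α i * f i) + η) :
    ∑ i, α i * (f i) ^ 2 ≥ (∑ i, α i * f i) ^ 2 + (∑ j ∈ J, α j) * η ^ 2 := by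
  set μ := ∑ i, α i * f i with hμ
  set w := ∑ j ∈ J, α j with hw
  have hJf : ∑ j ∈ J, α j * f j = w * (μ + η) := by
    field_simp at hdev
    linarith
  have h1 : ∑ j ∈ J, α j * (f j - μ) = w * η := by
    have : ∑ j ∈ J, α j * (f j - μ) = (∑ j ∈ J, α j * f j) - (∑ j ∈ J, α j) * μ := by
      rw [Finset.sum_mul]
      rw [← Finset.sum_sub_distrib]
      apply Finset.sum_congr rfl
      intro j _
      ring
    rw [this, hJf, ← hw]
    ring
  have hCS : (∑ j ∈ J, α j * (f j - μ)) ^ 2 ≤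
      (∑ j ∈ J, α j) * ∑ j ∈ J, α j * (f j - μ) ^ 2 := by
    have key := Finset.sum_mul_sq_le_sq_mul_sq J (fun j => Real.sqrt (α j))
      (fun j => Real.sqrt (α j) * (f j - μ))
    have e1 : ∀ j ∈ J, Real.sqrt (α j) * (Real.sqrt (α j) * (f j - μ)) = α j * (f j - μ) := by
      intro j _
      rw [← mul_assoc, Real.mul_self_sqrt (hα j)]
    have e2 : ∀ j ∈ J, (Real.sqrt (α j)) ^ 2 = α j := fun j _ => Real.sq_sqrt (hα j)
    have e3 : ∀ j ∈ J, (Real.sqrt (α j) * (f j - μ)) ^ 2 = α j * (f j - μ) ^ 2 := by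
      intro j _
      rw [mul_pow, Real.sq_sqrt (hα j)]
    rw [Finset.sum_congr rfl e1, Finset.sum_congr rfl e2, Finset.sum_congr rfl e3] at key
    exact key
  have h2 : w * η ^ 2 ≤ ∑ j ∈ J, α j * (f j - μ) ^ 2 := by
    rw [h1] at hCS
    rw [← hw] at hCS
    have : w * (w * η ^ 2) ≤ w * ∑ j ∈ J, α j * (f j - μ) ^ 2 := by nlinarith
    exact le_of_mul_le_mul_left this hJpos
  have h3 : ∑ j ∈ J, α j * (f j - μ) ^ 2 ≤ ∑ i, α i * (f i - μ) ^ 2 := by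
    apply Finset.sum_le_sum_of_subset_of_nonneg (Finset.subset_univ J)
    intro i _ _
    exact mul_nonneg (hα i) (sq_nonneg _)
  have h4 : ∑ i, α i * (f i - μ) ^ 2 = (∑ i, α i * (f i) ^ 2) - μ ^ 2 := by
    have expand : ∀ i, α i * (f i - μ) ^ 2
        = α i * (f i) ^ 2 - 2 * μ * (α i * f i) + μ ^ 2 * α i := by
      intro i; ring
    rw [Finset.sum_congr rfl fun i _ => expand i]
    rw [Finset.sum_add_distrib, Finset.sum_sub_distrib, ← Finset.mul_sum, ← Finset.mul_sum,
      hsum, ← hμ]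
    ring
  linarith
end

section
/- Let $p$ be a prime and let $L(X_1,\dots,X_\ell) = \sum_{i=1}^{\ell}\alpha_i X_i$ be a linear form over $\mathbb{F}_p$ with $\alpha_i \in \mathbb{F}_p$. For a positive integer $d$, define the $d$-th tensor power $L^{\otimes d} \in \mathbb{F}_p^{\ell^d}$ by $(L^{\otimes d})_{(i_1,\dots,i_d)} = \prod_{j=1}^d \alpha_{i_j}$. If $a'_1,\dots,a'_m$ are linear forms over variables $(X_1,\dots,X_\ell)$ such that the span of $\{(a'_1)^{\otimes d},\dots,(a'_m)^{\otimes d}\}$ has dimension $q$, and for some $k$ the form $a'_k$ equals the coordinate projection $X_1$, then the $2m$ linear forms over $(Z, X_2,\dots,X_\ell, Y_2,\dots,Y_\ell)$ given by $a'_1(Z,X_2,\dots,X_\ell),\dots,a'_m(Z,X_2,\dots,X_\ell), a'_1(Z,Y_2,\dots,Y_\ell),\dots,a'_m(Z,Y_2,\dots,Y_\ell)$ have $d$-th tensor powers whose span has dimension exactly $2q - 1$. -/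
/-- The `d`-th tensor power of a linear form with coefficient vector `α` over variable set `V`:
the vector in `(ZMod p)^(V^d)` whose `(i₁,…,i_d)` entry is `∏ⱼ α (iⱼ)`. -/
def tpow {p : ℕ} (d : ℕ) {V : Type*} (α : V → ZMod p) : (Fin d → V) → ZMod p :=
  fun i => ∏ j, α (i j)

/-- The coordinate swap fixing the shared variable `Z` (index `inl 0`) and exchanging
the `X` and `Y` variables. -/
def sw {ℓ : ℕ} : Fin (ℓ + 1) ⊕ Fin ℓ → Fin (ℓ + 1) ⊕ Fin ℓ
  | Sum.inl v => if h : v = 0 then Sum.inl 0 else Sum.inr (v.pred h)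
  | Sum.inr i => Sum.inl i.succ

lemma sw_sw {ℓ : ℕ} (x : Fin (ℓ + 1) ⊕ Fin ℓ) : sw (sw x) = x := by
  rcases x with v | i
  · by_cases h : v = 0
    · subst h; simp [sw]
    · simp [sw, h]
  · simp [sw, Fin.succ_ne_zero]

def swEquiv {ℓ : ℕ} : (Fin (ℓ + 1) ⊕ Fin ℓ) ≃ (Fin (ℓ + 1) ⊕ Fin ℓ) :=
  ⟨sw, sw, sw_sw, sw_sw⟩

/-- Juxtaposing two copies of a system of linear forms sharing the single variable `Z`
(the first variable, index `0` of `Fin (ℓ+1)`), where one of the forms is exactly `Z`: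
if the span of the `d`-th tensor powers of `a₁,…,a_m` has dimension `q`, then the span of the
`d`-th tensor powers of the `2m` juxtaposed forms has dimension exactly `2q - 1`. -/
theorem dim_of_juxtaposed_forms {p : ℕ} [Fact p.Prime] {ℓ m d q : ℕ} (hd : 0 < d)
    (a : Fin m → Fin (ℓ + 1) → ZMod p) (k : Fin m)
    (hk : a k = fun v => if v = 0 then 1 else 0)
    (hq : Module.finrank (ZMod p)
        (Submodule.span (ZMod p) (Set.range fun j => tpow (p := p) d (a j))) = q) :
    Module.finrank (ZMod p)
      (Submodule.span (ZMod p)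
        ((Set.range fun j : Fin m =>
            tpow (p := p) d (Sum.elim (a j) (0 : Fin ℓ → ZMod p))) ∪
         (Set.range fun j : Fin m =>
            tpow (p := p) d (Sum.elim (fun v : Fin (ℓ + 1) => if v = 0 then a j 0 else 0)
              (fun i : Fin ℓ => a j i.succ))))) = 2 * q - 1 := by
  classical
  set e₁ : Fin m → (Fin (ℓ + 1) ⊕ Fin ℓ) → ZMod p := fun j => Sum.elim (a j) 0 with he₁
  set e₂ : Fin m → (Fin (ℓ + 1) ⊕ Fin ℓ) → ZMod p :=
    fun j => Sum.elim (fun v : Fin (ℓ + 1) => if v = 0 then a j 0 else 0)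
      (fun i : Fin ℓ => a j i.succ) with he₂
  have he : ∀ j, e₂ j = e₁ j ∘ sw := by
    intro j; funext x
    rcases x with v | i
    · by_cases h : v = 0 <;> simp [he₁, he₂, sw, h]
    · simp [he₁, he₂, sw]
  set W₁ := Submodule.span (ZMod p) (Set.range fun j => tpow (p := p) d (e₁ j)) with hW₁
  set W₂ := Submodule.span (ZMod p) (Set.range fun j => tpow (p := p) d (e₂ j)) with hW₂
  rw [Submodule.span_union]
  show Module.finrank (ZMod p) ↥(W₁ ⊔ W₂) = 2 * q - 1
  -- vanishing lemma
  have hvanish : ∀ (S : Set ((Fin d → (Fin (ℓ + 1) ⊕ Fin ℓ)) → ZMod p))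
      (c : Fin d → (Fin (ℓ + 1) ⊕ Fin ℓ)),
      (∀ g ∈ S, g c = 0) → ∀ g ∈ Submodule.span (ZMod p) S, g c = 0 := by
    intro S c hS g hg
    have hle : Submodule.span (ZMod p) S ≤
        LinearMap.ker (LinearMap.proj (R := ZMod p) (φ := fun _ => ZMod p) c) :=
      Submodule.span_le.2 fun x hx => hS x hx
    exact hle hg
  -- supports
  have hsupp₁ : ∀ g ∈ W₁, ∀ i : Fin d → (Fin (ℓ + 1) ⊕ Fin ℓ),
      (∃ j v, i j = Sum.inr v) → g i = 0 := by
    intro g hg i hi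
    obtain ⟨j, v, hjv⟩ := hi
    refine hvanish _ i ?_ g hg
    rintro x ⟨j', rfl⟩
    have : e₁ j' (i j) = 0 := by rw [hjv]; simp [he₁]
    exact Finset.prod_eq_zero (Finset.mem_univ j) this
  have hsupp₂ : ∀ g ∈ W₂, ∀ i : Fin d → (Fin (ℓ + 1) ⊕ Fin ℓ),
      (∃ j v, v ≠ 0 ∧ i j = Sum.inl v) → g i = 0 := by
    intro g hg i hi
    obtain ⟨j, v, hv, hjv⟩ := hi
    refine hvanish _ i ?_ g hg
    rintro x ⟨j', rfl⟩
    have : e₂ j' (i j) = 0 := by rw [hjv]; simp [he₂, hv]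
    exact Finset.prod_eq_zero (Finset.mem_univ j) this
  -- the restriction map to the X-variables
  set R : ((Fin d → (Fin (ℓ + 1) ⊕ Fin ℓ)) → ZMod p) →ₗ[ZMod p]
      ((Fin d → Fin (ℓ + 1)) → ZMod p) :=
    LinearMap.funLeft (ZMod p) (ZMod p) (fun i => Sum.inl ∘ i) with hR
  have hRt : ∀ j, R (tpow (p := p) d (e₁ j)) = tpow (p := p) d (a j) := by
    intro j; funext i
    simp [hR, LinearMap.funLeft_apply, tpow, he₁, Function.comp]
  -- finrank W₁ = q
  have hrank₁ : Module.finrank (ZMod p) W₁ = q := by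
    set f : W₁ →ₗ[ZMod p] ((Fin d → Fin (ℓ + 1)) → ZMod p) := R.comp W₁.subtype with hf
    have hinj : Function.Injective f := by
      rw [← LinearMap.ker_eq_bot, Submodule.eq_bot_iff]
      rintro ⟨g, hg⟩ hgker
      have hRg : R g = 0 := hgker
      have : g = 0 := by
        funext i
        by_cases h : ∀ j, ∃ v, i j = Sum.inl v
        · have hi : i = Sum.inl ∘ fun j => (h j).choose := by
            funext j; exact (h j).choose_spec
          have := congrFun hRg (fun j => (h j).choose)
          simpa [hR, LinearMap.funLeft_apply, ← hi] using this
        · push_neg at h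
          obtain ⟨j, hj⟩ := h
          rcases hx : i j with v | v
          · exact absurd hx (hj v)
          · exact hsupp₁ g hg i ⟨j, v, hx⟩
      simpa [Subtype.ext_iff] using this
    have hrange : LinearMap.range f =
        Submodule.span (ZMod p) (Set.range fun j => tpow (p := p) d (a j)) := by
      rw [hf, LinearMap.range_comp, Submodule.range_subtype, hW₁, Submodule.map_span]
      congr 1
      rw [← Set.range_comp]
      exact congrArg Set.range (funext fun j => hRt j)
    calc Module.finrank (ZMod p) W₁
        = Module.finrank (ZMod p) (LinearMap.range f) :=
          (LinearEquiv.ofInjective f hinj).finrank_eq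
      _ = q := by rw [hrange]; exact hq
  -- W₂ is the image of W₁ under the swap equivalence
  set σ : ((Fin d → (Fin (ℓ + 1) ⊕ Fin ℓ)) → ZMod p) ≃ₗ[ZMod p]
      ((Fin d → (Fin (ℓ + 1) ⊕ Fin ℓ)) → ZMod p) :=
    LinearEquiv.funCongrLeft (ZMod p) (ZMod p)
      (Equiv.arrowCongr (Equiv.refl (Fin d)) swEquiv) with hσ
  have hσt : ∀ j, σ (tpow (p := p) d (e₁ j)) = tpow (p := p) d (e₂ j) := by
    intro j; funext i
    simp [hσ, LinearMap.funLeft_apply, tpow, he, Equiv.arrowCongr, swEquiv, Function.comp]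
  have hmap : Submodule.map (σ : ((Fin d → (Fin (ℓ + 1) ⊕ Fin ℓ)) → ZMod p) →ₗ[ZMod p]
      ((Fin d → (Fin (ℓ + 1) ⊕ Fin ℓ)) → ZMod p)) W₁ = W₂ := by
    rw [hW₁, hW₂, Submodule.map_span]
    congr 1
    rw [← Set.range_comp]
    exact congrArg Set.range (funext fun j => hσt j)
  have hrank₂ : Module.finrank (ZMod p) W₂ = q := by
    rw [← hmap, LinearEquiv.finrank_map_eq, hrank₁]
  -- the intersection
  set c : Fin d → (Fin (ℓ + 1) ⊕ Fin ℓ) := fun _ => Sum.inl 0 with hc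
  set ek : (Fin d → (Fin (ℓ + 1) ⊕ Fin ℓ)) → ZMod p := tpow (p := p) d (e₁ k) with hek
  have hekc : ek c = 1 := by
    simp [hek, tpow, hc, he₁, hk]
  have hekne : ∀ i : Fin d → (Fin (ℓ + 1) ⊕ Fin ℓ), i ≠ c → ek i = 0 := by
    intro i hi
    have : ∃ j, i j ≠ c j := by
      by_contra h; push_neg at h; exact hi (funext h)
    obtain ⟨j, hj⟩ := this
    have : e₁ k (i j) = 0 := by
      rcases hx : i j with v | v
      · have hv : v ≠ 0 := by
          intro hv0; apply hj; rw [hx, hv0]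
        simp [he₁, hk, hv]
      · simp [he₁]
    exact Finset.prod_eq_zero (Finset.mem_univ j) this
  have hek₁ : ek ∈ W₁ := Submodule.subset_span ⟨k, rfl⟩
  have heqk : e₂ k = e₁ k := by
    funext x
    rcases x with v | i
    · by_cases h : v = 0 <;> simp [he₁, he₂, hk, h]
    · simp [he₁, he₂, hk, Fin.succ_ne_zero]
  have hek₂ : ek ∈ W₂ := by
    have h2 : ek = tpow (p := p) d (e₂ k) := by rw [hek, heqk]
    rw [h2]; exact Submodule.subset_span ⟨k, rfl⟩
  have hinf : W₁ ⊓ W₂ = Submodule.span (ZMod p) {ek} := by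
    apply le_antisymm
    · rintro g ⟨hg₁, hg₂⟩
      rw [Submodule.mem_span_singleton]
      refine ⟨g c, ?_⟩
      funext i
      by_cases hic : i = c
      · subst hic; simp [hekc]
      · have hgi : g i = 0 := by
          have : ∃ j, i j ≠ c j := by
            by_contra h; push_neg at h; exact hic (funext h)
          obtain ⟨j, hj⟩ := this
          rcases hx : i j with v | v
          · have hv : v ≠ 0 := by
              intro hv0; apply hj; rw [hx, hv0]
            exact hsupp₂ g hg₂ i ⟨j, v, hv, hx⟩
          · exact hsupp₁ g hg₁ i ⟨j, v, hx⟩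
        simp [hgi, hekne i hic]
    · rw [Submodule.span_le, Set.singleton_subset_iff]
      exact ⟨hek₁, hek₂⟩
  have hekn0 : ek ≠ 0 := by
    intro h
    have := congrFun h c
    rw [hekc] at this
    exact one_ne_zero this
  have hrankinf : Module.finrank (ZMod p) (W₁ ⊓ W₂ : Submodule (ZMod p) _) = 1 := by
    rw [hinf]
    simpa using finrank_span_singleton hekn0
  have hsum := Submodule.finrank_sup_add_finrank_inf_eq W₁ W₂
  rw [hrank₁, hrank₂, hrankinf] at hsum
  omega
end

section
/- Fix $d < p$ where $p$ is prime, and suppose that for every $\delta > 0$ there exists $\epsilon(\delta) > 0$ such that every $f: \mathbb{F}_p^n \to \mathbb{R}$ with $\|f\|_\infty \leq 1$ and $\|f\|_{U^{d+1}} \geq \delta$ correlates with a phase polynomial: $|\mathbb{E}_x[f(x) e^{2\pi i P(x)/p}]| \geq \epsilon(\delta)$ for some polynomial $P$ of degree at most $d$ (the inverse theorem for the Gowers norm). Let $\mathcal{B}$ be a polynomial factor of degree $d$ and complexity $C$, and let $f: \mathbb{F}_p^n \to \{0,1\}$ satisfy $\|f - \mathbb{E}[f|\mathcal{B}]\|_{U^{d+1}}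 \geq \delta$. Then there exists a polynomial factor $\mathcal{B}'$ of degree $d$ and complexity at most $C+1$ refining $\mathcal{B}$ such that $\|\mathbb{E}[f|\mathcal{B}']\|_2^2 \geq \|\mathbb{E}[f|\mathcal{B}]\|_2^2 + \epsilon(\delta)^2$. -/
/-- Gowers uniformity norm of order `k` of a real function on a finite abelian group. -/
noncomputable def gowersNorm {G : Type*} [AddCommGroup G] [Fintype G] (f : G → ℝ) (k : ℕ) : ℝ :=
  ((∑ x : G, ∑ y : Fin k → G, ∏ S : Finset (Fin k), f (x + ∑ i ∈ S, y i)) /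
      (Fintype.card G : ℝ) ^ (k + 1)) ^ ((1 : ℝ) / 2 ^ k)

/-- The additive character `x ↦ e^{2πi x / p}` of `ZMod p`. -/
noncomputable def chi (p : ℕ) (x : ZMod p) : ℂ :=
  Complex.exp (2 * Real.pi * Complex.I * (x.val : ℂ) / (p : ℂ))

/-- Conditional expectation of `f` with respect to the partition induced by `B`
(with respect to the uniform measure on the finite domain). -/
noncomputable def condExp {V : Type*} [Fintype V] {β : Type*} [DecidableEq β]
    (f : V → ℝ) (B : V → β) : V → ℝ := fun x =>
  (∑ y ∈ Finset.univ.filter (fun y => B y = B x), f y) /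
    ((Finset.univ.filter (fun y => B y = B x)).card : ℝ)

namespace IndexIncrementAux

open Finset

variable {V : Type*} [Fintype V] {β : Type*} [DecidableEq β]

lemma cell_card_pos (B : V → β) (x : V) :
    (0:ℝ) < ((univ.filter (fun y => B y = B x)).card : ℝ) := by
  have hx : x ∈ univ.filter (fun y => B y = B x) := by simp
  exact_mod_cast Finset.card_pos.mpr ⟨x, hx⟩

lemma cell_eq (B : V → β) {x y : V} (h : B x = B y) :
    univ.filter (fun z => B z = B x) = univ.filter (fun z => B z = B y) := by
  simp only [h]

lemma condExp_meas (B : V → β) (f : V → ℝ) {x y : V} (h : B x = B y) :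
    condExp f B x = condExp f B y := by
  unfold condExp; rw [cell_eq B h]

lemma pull (B : V → β) (f h : V → ℝ) (hh : ∀ x y, B x = B y → h x = h y) :
    ∑ x, condExp f B x * h x = ∑ x, f x * h x := by
  have key : ∀ x : V, condExp f B x * h x
      = ∑ y, (if B y = B x then f y * h y / ((univ.filter (fun z => B z = B y)).card : ℝ) else 0) := by
    intro x
    rw [← Finset.sum_filter]
    unfold condExp
    rw [div_mul_eq_mul_div, Finset.sum_mul, Finset.sum_div]
    refine Finset.sum_congr rfl fun y hy => ?_
    have hby : B y = B x := (Finset.mem_filter.mp hy).2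
    rw [hh y x hby, cell_eq B hby]
  calc ∑ x, condExp f B x * h x
      = ∑ x, ∑ y, (if B y = B x then f y * h y / ((univ.filter (fun z => B z = B y)).card : ℝ) else 0) :=
        Finset.sum_congr rfl fun x _ => key x
    _ = ∑ y, ∑ x, (if B y = B x then f y * h y / ((univ.filter (fun z => B z = B y)).card : ℝ) else 0) :=
        Finset.sum_comm
    _ = ∑ y, f y * h y := by
        refine Finset.sum_congr rfl fun y _ => ?_
        rw [← Finset.sum_filter, Finset.sum_const]
        have : univ.filter (fun x => B y = B x) = univ.filter (fun x => B x = B y) := by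
          apply Finset.filter_congr; intro z _; simp [eq_comm]
        rw [this]
        rw [nsmul_eq_mul]
        have hne : ((univ.filter (fun z => B z = B y)).card : ℝ) ≠ 0 := (cell_card_pos B y).ne'
        field_simp

lemma condExp_of_meas (B : V → β) (h : V → ℝ) (hh : ∀ x y, B x = B y → h x = h y) (x : V) :
    condExp h B x = h x := by
  unfold condExp
  have : ∑ y ∈ univ.filter (fun y => B y = B x), h y
      = ∑ _y ∈ univ.filter (fun y => B y = B x), h x := by
    refine Finset.sum_congr rfl fun y hy => hh y x (Finset.mem_filter.mp hy).2
  rw [this, Finset.sum_const, nsmul_eq_mul]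
  have hne : ((univ.filter (fun y => B y = B x)).card : ℝ) ≠ 0 := (cell_card_pos B x).ne'
  field_simp

lemma condExp_sub (B : V → β) (f g : V → ℝ) (x : V) :
    condExp (fun y => f y - g y) B x = condExp f B x - condExp g B x := by
  unfold condExp
  rw [Finset.sum_sub_distrib, sub_div]

lemma condExp_mem (B : V → β) (f : V → ℝ) (h0 : ∀ x, 0 ≤ f x) (h1 : ∀ x, f x ≤ 1) (x : V) :
    0 ≤ condExp f B x ∧ condExp f B x ≤ 1 := by
  unfold condExp
  constructor
  · exact div_nonneg (Finset.sum_nonneg fun y _ => h0 y) (Nat.cast_nonneg _)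
  · rw [div_le_one (cell_card_pos B x)]
    calc ∑ y ∈ univ.filter (fun y => B y = B x), f y
        ≤ ∑ _y ∈ univ.filter (fun y => B y = B x), (1:ℝ) :=
          Finset.sum_le_sum fun y _ => h1 y
      _ = _ := by simp

lemma pullC (B : V → β) (g : V → ℝ) (w : V → ℂ) (hw : ∀ x y, B x = B y → w x = w y) :
    ∑ x, (g x : ℂ) * w x = ∑ x, ((condExp g B x : ℝ) : ℂ) * w x := by
  have hre : ∀ x y, B x = B y → (w x).re = (w y).re := fun x y h => by rw [hw x y h]
  have him : ∀ x y, B x = B y → (w x).im = (w y).im := fun x y h => by rw [hw x y h]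
  apply Complex.ext
  · rw [Complex.re_sum, Complex.re_sum]
    simp only [Complex.re_ofReal_mul]
    exact (pull B g (fun x => (w x).re) hre).symm
  · rw [Complex.im_sum, Complex.im_sum]
    simp only [Complex.im_ofReal_mul]
    exact (pull B g (fun x => (w x).im) him).symm

lemma abs_chi (p : ℕ) (x : ZMod p) : ‖chi p x‖ = 1 := by
  unfold chi
  have : (2 * Real.pi * Complex.I * (x.val : ℂ) / (p : ℂ))
      = ((2 * Real.pi * (x.val : ℝ) / (p : ℝ) : ℝ) : ℂ) * Complex.I := by
    push_cast; ring
  rw [this, Complex.norm_exp_ofReal_mul_I]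

end IndexIncrementAux

open IndexIncrementAux Finset

/-- Assuming the inverse theorem for the Gowers `U^{d+1}` norm over `𝔽_p^n` (with correlation
function `ε`), if `f : 𝔽_p^n → {0,1}` satisfies `‖f - 𝔼[f|𝓑]‖_{U^{d+1}} ≥ δ` for a polynomial
factor `𝓑` of degree `d` and complexity `C`, then there is a syntactic refinement `𝓑'` of
degree `d` and complexity `C+1` with `‖𝔼[f|𝓑']‖₂² ≥ ‖𝔼[f|𝓑]‖₂² + ε(δ)²`. -/
theorem index_increment {p n : ℕ} [Fact p.Prime] (d : ℕ) (hdp : d < p) (ε : ℝ → ℝ)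
    (hinv : ∀ δ : ℝ, 0 < δ → 0 < ε δ ∧
      ∀ f : (Fin n → ZMod p) → ℝ, (∀ x, |f x| ≤ 1) → gowersNorm f (d + 1) ≥ δ →
        ∃ P : MvPolynomial (Fin n) (ZMod p), P.totalDegree ≤ d ∧
          ε δ ≤ ‖((∑ x : Fin n → ZMod p,
            (f x : ℂ) * chi p (MvPolynomial.eval x P)) /
              ((Fintype.card (Fin n → ZMod p) : ℂ)))‖)
    {C : ℕ} (B : Fin C → MvPolynomial (Fin n) (ZMod p))
    (hB : ∀ i, (B i).totalDegree ≤ d)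
    (f : (Fin n → ZMod p) → ℝ) (hf : ∀ x, f x = 0 ∨ f x = 1)
    (δ : ℝ) (hδ : 0 < δ)
    (hgow : gowersNorm
      (fun x => f x - condExp f (fun y => fun i => MvPolynomial.eval y (B i)) x)
      (d + 1) ≥ δ) :
    ∃ B' : Fin (C + 1) → MvPolynomial (Fin n) (ZMod p),
      (∀ i : Fin C, B' i.castSucc = B i) ∧ (∀ i, (B' i).totalDegree ≤ d) ∧
      (∑ x : Fin n → ZMod p,
          (condExp f (fun y => fun i => MvPolynomial.eval y (B' i)) x) ^ 2) /
          (Fintype.card (Fin n → ZMod p) : ℝ)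
        ≥ (∑ x : Fin n → ZMod p,
            (condExp f (fun y => fun i => MvPolynomial.eval y (B i)) x) ^ 2) /
            (Fintype.card (Fin n → ZMod p) : ℝ) + (ε δ) ^ 2 := by
  classical
  obtain ⟨hε, hcor⟩ := hinv δ hδ
  set Bm : (Fin n → ZMod p) → (Fin C → ZMod p) :=
    fun y => fun i => MvPolynomial.eval y (B i) with hBm
  set e : (Fin n → ZMod p) → ℝ := condExp f Bm with he
  -- bounds
  have hf0 : ∀ x, 0 ≤ f x := fun x => by rcases hf x with h | h <;> simp [h]
  have hf1 : ∀ x, f x ≤ 1 := fun x => by rcases hf x with h | h <;> simp [h]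
  have he01 : ∀ x, 0 ≤ e x ∧ e x ≤ 1 := fun x => condExp_mem Bm f hf0 hf1 x
  have hgb : ∀ x, |f x - e x| ≤ 1 := by
    intro x
    rw [abs_le]
    constructor <;> nlinarith [hf0 x, hf1 x, (he01 x).1, (he01 x).2]
  obtain ⟨P, hPd, hPc⟩ := hcor (fun x => f x - e x) hgb hgow
  refine ⟨Fin.snoc B P, fun i => by simp, ?_, ?_⟩
  · intro i
    refine Fin.lastCases (motive := fun i => ((Fin.snoc (α := fun _ => MvPolynomial (Fin n) (ZMod p)) B P) i).totalDegree ≤ d) ?_ ?_ i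
    · simpa using hPd
    · intro j; simpa using hB j
  set B'm : (Fin n → ZMod p) → (Fin (C + 1) → ZMod p) :=
    fun y => fun i => MvPolynomial.eval y (Fin.snoc (α := fun _ => MvPolynomial (Fin n) (ZMod p)) B P i) with hB'm
  set e' : (Fin n → ZMod p) → ℝ := condExp f B'm with he'
  set g : (Fin n → ZMod p) → ℝ := fun x => f x - e x with hg
  set q : (Fin n → ZMod p) → ℝ := condExp g B'm with hq
  have href : ∀ x y, B'm x = B'm y → Bm x = Bm y := by
    intro x y h
    funext i
    have h2 := congrFun h i.castSucc
    simpa only [hB'm, Fin.snoc_castSucc] using h2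
  have hemeas : ∀ x y, B'm x = B'm y → e x = e y :=
    fun x y h => condExp_meas Bm f (href x y h)
  have hqe : ∀ x, q x = e' x - e x := by
    intro x
    rw [hq, hg]
    rw [condExp_sub B'm f e x, condExp_of_meas B'm e hemeas x]
  -- orthogonality
  have hsum_ee : ∑ x, e x * e x = ∑ x, f x * e x :=
    pull Bm f e (fun x y h => condExp_meas Bm f h)
  have hge : ∑ x, g x * e x = 0 := by
    have : ∑ x, g x * e x = ∑ x, f x * e x - ∑ x, e x * e x := by
      rw [← Finset.sum_sub_distrib]
      exact Finset.sum_congr rfl fun x _ => by rw [hg]; ring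
    rw [this, hsum_ee, sub_self]
  have hqe0 : ∑ x, q x * e x = 0 := by
    rw [pull B'm g e hemeas, hge]
  have hpyth : ∑ x, e' x ^ 2 = ∑ x, e x ^ 2 + ∑ x, q x ^ 2 := by
    have step : ∀ x : Fin n → ZMod p, e' x ^ 2 = e x ^ 2 + 2 * (q x * e x) + q x ^ 2 := by
      intro x
      have h : e' x = e x + q x := by linarith [hqe x]
      rw [h]; ring
    calc ∑ x, e' x ^ 2 = ∑ x, (e x ^ 2 + 2 * (q x * e x) + q x ^ 2) :=
          Finset.sum_congr rfl fun x _ => step x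
      _ = ∑ x, e x ^ 2 + 2 * ∑ x, q x * e x + ∑ x, q x ^ 2 := by
          rw [Finset.sum_add_distrib, Finset.sum_add_distrib, ← Finset.mul_sum]
      _ = ∑ x, e x ^ 2 + ∑ x, q x ^ 2 := by rw [hqe0]; ring
  -- correlation gives energy in q
  have hχ : ∀ x y, B'm x = B'm y →
      chi p (MvPolynomial.eval x P) = chi p (MvPolynomial.eval y P) := by
    intro x y h
    have h2 := congrFun h (Fin.last C)
    simp only [hB'm, Fin.snoc_last] at h2
    rw [h2]
  have hSeq : ∑ x, (g x : ℂ) * chi p (MvPolynomial.eval x P)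
      = ∑ x, ((q x : ℝ) : ℂ) * chi p (MvPolynomial.eval x P) :=
    pullC B'm g (fun x => chi p (MvPolynomial.eval x P)) hχ
  set N : ℝ := (Fintype.card (Fin n → ZMod p) : ℝ) with hN
  have hN0 : 0 < N := by
    rw [hN]; exact_mod_cast Fintype.card_pos
  have habsS : ‖∑ x, (g x : ℂ) * chi p (MvPolynomial.eval x P)‖ ≤ ∑ x, |q x| := by
    rw [hSeq]
    refine le_trans (norm_sum_le _ _) (le_of_eq ?_)
    refine Finset.sum_congr rfl fun x _ => ?_
    rw [norm_mul, abs_chi, Complex.norm_real, Real.norm_eq_abs, mul_one]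
  have hcor2 : ε δ * N ≤ ∑ x, |q x| := by
    have habsdiv : ‖((∑ x, (g x : ℂ) * chi p (MvPolynomial.eval x P)) /
        ((Fintype.card (Fin n → ZMod p) : ℂ)))‖
        = ‖∑ x, (g x : ℂ) * chi p (MvPolynomial.eval x P)‖ / N := by
      rw [norm_div, Complex.norm_natCast]
    have h1 : ε δ ≤ ‖∑ x, (g x : ℂ) * chi p (MvPolynomial.eval x P)‖ / N := by
      rw [← habsdiv]; exact hPc
    have h2 : ε δ * N ≤ (‖∑ x, (g x : ℂ) * chi p (MvPolynomial.eval x P)‖ / N) * N :=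
      mul_le_mul_of_nonneg_right h1 hN0.le
    rw [div_mul_cancel₀ _ hN0.ne'] at h2
    exact le_trans h2 habsS
  have hCS : (∑ x, |q x|) ^ 2 ≤ N * ∑ x, q x ^ 2 := by
    have h := Finset.sum_mul_sq_le_sq_mul_sq Finset.univ
      (fun _ : Fin n → ZMod p => (1 : ℝ)) (fun x => |q x|)
    simp only [one_pow, one_mul, Finset.sum_const, nsmul_eq_mul, mul_one, sq_abs,
      Finset.card_univ] at h
    rw [← hN] at h
    exact h
  have hq2 : ε δ ^ 2 * N ≤ ∑ x, q x ^ 2 := by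
    have habs0 : 0 ≤ ∑ x, |q x| := Finset.sum_nonneg fun x _ => abs_nonneg _
    have hsq : (ε δ * N) ^ 2 ≤ (∑ x, |q x|) ^ 2 := by
      apply pow_le_pow_left₀ (by positivity) hcor2
    nlinarith [hsq, hCS, hN0]
  -- conclude
  have hfinal : ε δ ^ 2 ≤ (∑ x, q x ^ 2) / N := by
    rw [le_div_iff₀ hN0]
    exact hq2
  rw [ge_iff_le]
  rw [hpyth]
  rw [add_div]
  linarith [hfinal]
end

section
/- Let $p$ be prime, $n, C, C'$ integers with $C \leq C'$, and let $f : \mathbb{F}_p^n \to [R]$. Let $\mathcal{B}' : \mathbb{F}_p^n \to \mathbb{F}_p^{C'}$ be a polynomial factor syntactically refining $\mathcal{B} : \mathbb{F}_p^n \to \mathbb{F}_p^{C}$, and fix $s \in \mathbb{F}_p^{C'-C}$ and $\zeta, \beta > 0$. Assume: (i) every cell of $\mathcal{B}$ has probability at most $(1+\beta)p^{-C}$ under the uniform measure on $\mathbb{F}_p^n$; (ii) $\Pr_{c \in \mathbb{F}_p^{C}}[\exists i \in [R]: |\Pr[f(x)=i \mid \mathcal{B}(x)=c] - \Pr[f(x)=i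 \mid \mathcal{B}'(x)=(c,s)]| > \zeta] < \zeta$. Let $F$ be the $\zeta$-cleanup of $f$ with respect to $\mathcal{B}, \mathcal{B}', s$. Then $\Pr_{x}[F(x) \neq f(x)] \leq (2R + 1 + \beta)\zeta$. -/
open scoped Classical

namespace Cleanup

variable {p n C C₂ R : ℕ}

/-- `Pr[f(x) = i | 𝓑(x) = c]`: conditional probability of the value `i` within the cell `c`
of the coarse factor. -/
noncomputable def prCell (f : (Fin n → ZMod p) → Fin R) (B : (Fin n → ZMod p) → Fin C → ZMod p)
    (i : Fin R) (c : Fin C → ZMod p) : ℝ :=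
  (Nat.card {x : Fin n → ZMod p // f x = i ∧ B x = c} : ℝ) /
    (Nat.card {x : Fin n → ZMod p // B x = c} : ℝ)

/-- `Pr[f(x) = i | 𝓑'(x) = (c,s)]`: conditional probability of the value `i` within the
subcell `(c, s)` of the syntactic refinement `𝓑' = (𝓑, 𝓑₂)`. -/
noncomputable def prSubcell (f : (Fin n → ZMod p) → Fin R)
    (B : (Fin n → ZMod p) → Fin C → ZMod p) (B₂ : (Fin n → ZMod p) → Fin C₂ → ZMod p)
    (s : Fin C₂ → ZMod p) (i : Fin R) (c : Fin C → ZMod p) : ℝ :=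
  (Nat.card {x : Fin n → ZMod p // f x = i ∧ B x = c ∧ B₂ x = s} : ℝ) /
    (Nat.card {x : Fin n → ZMod p // B x = c ∧ B₂ x = s} : ℝ)

/-- A cell `c` is bad if some value's conditional probability in the cell differs from its
conditional probability in the selected subcell `(c,s)` by more than `ζ`. -/
def Bad (f : (Fin n → ZMod p) → Fin R) (B : (Fin n → ZMod p) → Fin C → ZMod p)
    (B₂ : (Fin n → ZMod p) → Fin C₂ → ZMod p) (s : Fin C₂ → ZMod p) (ζ : ℝ)
    (c : Fin C → ZMod p) : Prop :=
  ∃ i : Fin R, ζ < |prCell f B i c - prSubcell f B B₂ s i c|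

/-- The `ζ`-cleanup of `f` with respect to `𝓑`, `𝓑' = (𝓑,𝓑₂)` and `s`, given a choice
function `pop` selecting a most popular value on each subcell `(c,s)`: on bad cells, and on
values that are rare (`< ζ`) in the selected subcell, `f` is replaced by `pop`. -/
noncomputable def cleanup (f : (Fin n → ZMod p) → Fin R)
    (B : (Fin n → ZMod p) → Fin C → ZMod p) (B₂ : (Fin n → ZMod p) → Fin C₂ → ZMod p)
    (s : Fin C₂ → ZMod p) (ζ : ℝ) (pop : (Fin C → ZMod p) → Fin R) :
    (Fin n → ZMod p) → Fin R := fun x =>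
  if Bad f B B₂ s ζ (B x) then pop (B x)
  else if prSubcell f B B₂ s (f x) (B x) < ζ then pop (B x)
  else f x

private lemma natCard_filter {α : Type*} [Fintype α] (P : α → Prop) [DecidablePred P] :
    (Nat.card {x : α // P x}) = (Finset.univ.filter P).card := by
  rw [Nat.card_eq_fintype_card, Fintype.card_subtype]

/-- The cleanup lemma: if every cell of `𝓑` has probability at most `(1+β)p^{-C}` and fewer
than a `ζ`-fraction of the cells are bad, then the `ζ`-cleanup `F` of `f` is
`(2R+1+β)ζ`-close to `f`. -/
theorem cleanup_close [Fact p.Prime] (f : (Fin n → ZMod p) → Fin R)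
    (B : (Fin n → ZMod p) → Fin C → ZMod p) (B₂ : (Fin n → ZMod p) → Fin C₂ → ZMod p)
    (s : Fin C₂ → ZMod p) (ζ β : ℝ)
    (pop : (Fin C → ZMod p) → Fin R)
    (hpop : ∀ (c : Fin C → ZMod p) (i : Fin R),
      Nat.card {x : Fin n → ZMod p // f x = i ∧ B x = c ∧ B₂ x = s} ≤
        Nat.card {x : Fin n → ZMod p // f x = pop c ∧ B x = c ∧ B₂ x = s})
    (hcellsize : ∀ c : Fin C → ZMod p,
      (Nat.card {x : Fin n → ZMod p // B x = c} : ℝ) / (p : ℝ) ^ n ≤ (1 + β) / (p : ℝ) ^ C)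
    (hbad : (Nat.card {c : Fin C → ZMod p // Bad f B B₂ s ζ c} : ℝ) / (p : ℝ) ^ C < ζ) :
    (Nat.card {x : Fin n → ZMod p // cleanup f B B₂ s ζ pop x ≠ f x} : ℝ) / (p : ℝ) ^ n
      ≤ (2 * R + 1 + β) * ζ := by
  classical
  have hprime : p.Prime := Fact.out
  have hppos : (0:ℝ) < p := by exact_mod_cast hprime.pos
  have hpn : (0:ℝ) < (p:ℝ)^n := pow_pos hppos n
  have hpC : (0:ℝ) < (p:ℝ)^C := pow_pos hppos C
  have hζ : 0 < ζ := lt_of_le_of_lt (by positivity) hbad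
  -- 1 + β > 0
  have hβ : 0 < 1 + β := by
    have hx0 : (0 : Fin n → ZMod p) ∈ Finset.univ.filter (fun x => B x = B 0) := by simp
    have h1 : (1:ℝ) ≤ ((Finset.univ.filter (fun x => B x = B 0)).card : ℝ) := by
      exact_mod_cast Finset.card_pos.2 ⟨_, hx0⟩
    have h2 := hcellsize (B 0)
    rw [natCard_filter] at h2
    have h3 : 0 < (1+β) / (p:ℝ)^C := lt_of_lt_of_le (div_pos (by linarith) hpn) h2
    have := mul_pos h3 hpC
    rwa [div_mul_cancel₀ _ (ne_of_gt hpC)] at this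
  -- the set of changed points is inside T
  set T : Finset (Fin n → ZMod p) := Finset.univ.filter
    (fun x => Bad f B B₂ s ζ (B x) ∨ prSubcell f B B₂ s (f x) (B x) < ζ) with hT
  have hST : Finset.univ.filter (fun x => cleanup f B B₂ s ζ pop x ≠ f x) ⊆ T := by
    intro x hx
    simp only [hT, Finset.mem_filter, Finset.mem_univ, true_and] at hx ⊢
    by_contra h
    push_neg at h
    exact hx (by simp [cleanup, h.1, not_lt_of_ge h.2])
  -- fiberwise decomposition of T over cells
  have hTsum : T.card = ∑ c : Fin C → ZMod p, (T.filter (fun x => B x = c)).card :=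
    Finset.card_eq_sum_card_fiberwise (fun x _ => Finset.mem_univ (B x))
  -- per-cell bound
  have hper : ∀ c : Fin C → ZMod p, ((T.filter (fun x => B x = c)).card : ℝ) ≤
      (if Bad f B B₂ s ζ c then (1+β)/(p:ℝ)^C * (p:ℝ)^n
       else (2*ζ*R) * ((Finset.univ.filter (fun x => B x = c)).card : ℝ)) := by
    intro c
    by_cases hb : Bad f B B₂ s ζ c
    · rw [if_pos hb]
      have h1 : (T.filter (fun x => B x = c)).card ≤
          (Finset.univ.filter (fun x => B x = c)).card :=
        Finset.card_le_card (Finset.filter_subset_filter _ (Finset.subset_univ T))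
      have h2 := hcellsize c
      rw [natCard_filter, div_le_iff₀ hpn] at h2
      calc ((T.filter (fun x => B x = c)).card : ℝ)
          ≤ ((Finset.univ.filter (fun x => B x = c)).card : ℝ) := by exact_mod_cast h1
        _ ≤ (1+β)/(p:ℝ)^C * (p:ℝ)^n := h2
    · rw [if_neg hb]
      set m := (Finset.univ.filter (fun x => B x = c)).card with hm
      have hfib : (T.filter (fun x => B x = c)).card
          = ∑ i : Fin R, ((T.filter (fun x => B x = c)).filter (fun x => f x = i)).card :=
        Finset.card_eq_sum_card_fiberwise (fun x _ => Finset.mem_univ (f x))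
      have hbound : ∀ i : Fin R,
          (((T.filter (fun x => B x = c)).filter (fun x => f x = i)).card : ℝ)
            ≤ 2*ζ * (m : ℝ) := by
        intro i
        by_cases hsub : prSubcell f B B₂ s i c < ζ
        · have hsubset : (T.filter (fun x => B x = c)).filter (fun x => f x = i)
              ⊆ Finset.univ.filter (fun x => f x = i ∧ B x = c) := by
            intro x hx
            simp only [Finset.mem_filter, Finset.mem_univ, true_and] at hx ⊢
            exact ⟨hx.2, hx.1.2⟩
          set k := (Finset.univ.filter (fun x => f x = i ∧ B x = c)).card with hk
          have h1 : ((T.filter (fun x => B x = c)).filter (fun x => f x = i)).card ≤ k :=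
            Finset.card_le_card hsubset
          have habs : |prCell f B i c - prSubcell f B B₂ s i c| ≤ ζ := by
            by_contra h
            exact hb ⟨i, not_le.1 h⟩
          have hpr : prCell f B i c < 2*ζ := by
            have h2 := abs_le.1 habs
            linarith [h2.1, h2.2]
          have hkm : k ≤ m := by
            apply Finset.card_le_card
            intro x hx
            simp only [Finset.mem_filter, Finset.mem_univ, true_and] at hx ⊢
            exact hx.2
          have hprEq : prCell f B i c = (k:ℝ)/(m:ℝ) := by
            rw [prCell, natCard_filter, natCard_filter]
          rcases Nat.eq_zero_or_pos m with h0 | hpos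
          · have hk0 : k = 0 := Nat.le_zero.1 (h0 ▸ hkm)
            have : ((T.filter (fun x => B x = c)).filter (fun x => f x = i)).card = 0 :=
              Nat.le_zero.1 (hk0 ▸ h1)
            rw [this, h0]
            simp
          · have hmpos : (0:ℝ) < m := by exact_mod_cast hpos
            have hklt : (k:ℝ) < 2*ζ*(m:ℝ) := by
              rw [hprEq] at hpr
              exact (div_lt_iff₀ hmpos).1 hpr
            calc (((T.filter (fun x => B x = c)).filter (fun x => f x = i)).card : ℝ)
                ≤ (k:ℝ) := by exact_mod_cast h1
              _ ≤ 2*ζ*(m:ℝ) := le_of_lt hklt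
        · have hempty : (T.filter (fun x => B x = c)).filter (fun x => f x = i) = ∅ := by
            rw [Finset.eq_empty_iff_forall_notMem]
            intro x hx
            simp only [hT, Finset.mem_filter, Finset.mem_univ, true_and] at hx
            obtain ⟨⟨hor, hBc⟩, hfi⟩ := hx
            rcases hor with hbad' | hlt
            · exact hb (hBc ▸ hbad')
            · exact hsub (by rw [← hfi, ← hBc]; exact hlt)
          rw [hempty]
          simp only [Finset.card_empty, Nat.cast_zero]
          positivity
      calc ((T.filter (fun x => B x = c)).card : ℝ)
          = ∑ i : Fin R, (((T.filter (fun x => B x = c)).filter (fun x => f x = i)).card : ℝ) := by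
            exact_mod_cast hfib
        _ ≤ ∑ _i : Fin R, 2*ζ*(m:ℝ) := Finset.sum_le_sum (fun i _ => hbound i)
        _ = (2*ζ*R) * (m:ℝ) := by
            rw [Finset.sum_const, Finset.card_univ, Fintype.card_fin, nsmul_eq_mul]
            ring
  -- total mass of cells
  have htot : ∑ c : Fin C → ZMod p,
      ((Finset.univ.filter (fun x => B x = c)).card : ℝ) = (p:ℝ)^n := by
    have h1 : (Finset.univ : Finset (Fin n → ZMod p)).card
        = ∑ c : Fin C → ZMod p, (Finset.univ.filter (fun x => B x = c)).card :=
      Finset.card_eq_sum_card_fiberwise (fun x _ => Finset.mem_univ (B x))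
    have h2 : (Finset.univ : Finset (Fin n → ZMod p)).card = p^n := by
      simp [Finset.card_univ, ZMod.card]
    rw [← Nat.cast_sum, ← h1, h2]
    push_cast
    ring
  -- bad cell count
  have hbadcard : ((Finset.univ.filter (Bad f B B₂ s ζ)).card : ℝ) / (p:ℝ)^C < ζ := by
    rwa [natCard_filter] at hbad
  -- assemble
  have hTbound : (T.card : ℝ) ≤
      ((Finset.univ.filter (Bad f B B₂ s ζ)).card : ℝ) * ((1+β)/(p:ℝ)^C * (p:ℝ)^n)
        + 2*ζ*R * (p:ℝ)^n := by
    calc (T.card : ℝ)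
        = ∑ c : Fin C → ZMod p, ((T.filter (fun x => B x = c)).card : ℝ) := by
          exact_mod_cast hTsum
      _ ≤ ∑ c : Fin C → ZMod p,
            (if Bad f B B₂ s ζ c then (1+β)/(p:ℝ)^C * (p:ℝ)^n
             else (2*ζ*R) * ((Finset.univ.filter (fun x => B x = c)).card : ℝ)) :=
          Finset.sum_le_sum (fun c _ => hper c)
      _ = ∑ c ∈ Finset.univ.filter (Bad f B B₂ s ζ), ((1+β)/(p:ℝ)^C * (p:ℝ)^n)
            + ∑ c ∈ Finset.univ.filter (fun c => ¬ Bad f B B₂ s ζ c),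
                (2*ζ*R) * ((Finset.univ.filter (fun x => B x = c)).card : ℝ) :=
          Finset.sum_ite _ _
      _ ≤ ((Finset.univ.filter (Bad f B B₂ s ζ)).card : ℝ) * ((1+β)/(p:ℝ)^C * (p:ℝ)^n)
            + 2*ζ*R * (p:ℝ)^n := by
          have e1 : ∑ c ∈ Finset.univ.filter (Bad f B B₂ s ζ), ((1+β)/(p:ℝ)^C * (p:ℝ)^n)
              = ((Finset.univ.filter (Bad f B B₂ s ζ)).card : ℝ) * ((1+β)/(p:ℝ)^C * (p:ℝ)^n) := by
            rw [Finset.sum_const, nsmul_eq_mul]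
          have e2 : ∑ c ∈ Finset.univ.filter (fun c => ¬ Bad f B B₂ s ζ c),
                (2*ζ*R) * ((Finset.univ.filter (fun x => B x = c)).card : ℝ)
              ≤ 2*ζ*R * (p:ℝ)^n := by
            calc ∑ c ∈ Finset.univ.filter (fun c => ¬ Bad f B B₂ s ζ c),
                  (2*ζ*R) * ((Finset.univ.filter (fun x => B x = c)).card : ℝ)
                ≤ ∑ c : Fin C → ZMod p,
                    (2*ζ*R) * ((Finset.univ.filter (fun x => B x = c)).card : ℝ) :=
                  Finset.sum_le_sum_of_subset_of_nonneg (Finset.filter_subset _ _)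
                    (fun c _ _ => by positivity)
              _ = 2*ζ*R * (p:ℝ)^n := by rw [← Finset.mul_sum, htot]
          linarith [e2, le_of_eq e1]
  -- final estimate
  have hScard : (Nat.card {x : Fin n → ZMod p // cleanup f B B₂ s ζ pop x ≠ f x} : ℝ)
      ≤ (T.card : ℝ) := by
    rw [natCard_filter]
    exact_mod_cast Finset.card_le_card hST
  rw [div_le_iff₀ hpn]
  have hbadmass : ((Finset.univ.filter (Bad f B B₂ s ζ)).card : ℝ) * ((1+β)/(p:ℝ)^C * (p:ℝ)^n)
      ≤ ζ * ((1+β) * (p:ℝ)^n) := by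
    have h1 : ((Finset.univ.filter (Bad f B B₂ s ζ)).card : ℝ) * ((1+β)/(p:ℝ)^C * (p:ℝ)^n)
        = (((Finset.univ.filter (Bad f B B₂ s ζ)).card : ℝ) / (p:ℝ)^C) * ((1+β) * (p:ℝ)^n) := by
      field_simp
    rw [h1]
    exact mul_le_mul_of_nonneg_right (le_of_lt hbadcard) (by positivity)
  calc (Nat.card {x : Fin n → ZMod p // cleanup f B B₂ s ζ pop x ≠ f x} : ℝ)
      ≤ (T.card : ℝ) := hScard
    _ ≤ ((Finset.univ.filter (Bad f B B₂ s ζ)).card : ℝ) * ((1+β)/(p:ℝ)^C * (p:ℝ)^n)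
          + 2*ζ*R * (p:ℝ)^n := hTbound
    _ ≤ ζ * ((1+β) * (p:ℝ)^n) + 2*ζ*R * (p:ℝ)^n := by linarith
    _ = (2 * R + 1 + β) * ζ * (p:ℝ)^n := by ring

end Cleanup
end

section
/- Let $f : \mathbb{F}_p^n \to [R]$ and let $\mathcal{B}$ be a polynomial factor on $\mathbb{F}_p^n$ with defining polynomials of degrees $d_1,\dots,d_C$, all less than $p$. Define the big picture function $f_\mathcal{B} : \mathbb{F}_p^C \to 2^{[R]}$ by $f_\mathcal{B}(y) = \{f(x) : \mathcal{B}(x) = y\}$. If $f$ induces an affine constraint $(A, \sigma)$ with $A = (a_1,\dots,a_m)$ on $\ell$ variables, i.e., there exist $x_1,\dots,x_\ell \in \mathbb{F}_p^n$ with $f(a_j(x_1,\dots,x_\ell)) = \sigma_j$ for all $j \in [m]$, then $f_\mathcal{B}$ partially $(d_1,\dots,d_C)$-induces $(A,\sigma)$: there exist $b_1,\dots,b_m \in \mathbb{F}_p^C$ that are consistent with respect to $A$ and $(d_1,\dots,d_C)$, and satisfy $\sigma_j \in f_\mathcal{B}(b_j)$ for all $j \in [m]$. -/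
/-- Padding lemma: a monomial of total degree at most `d` in `ℓ` variables can be realized
as a `d`-fold product of variable values, padding with a designated index `z` where the
value is `1`. -/
lemma exists_pad_tuple {ℓ : ℕ} (z : Fin ℓ) :
    ∀ (d : ℕ) (s : Fin ℓ → ℕ), (∑ k, s k) ≤ d →
    ∃ ι : Fin d → Fin ℓ, ∀ {M : Type*} [CommMonoid M] (g : Fin ℓ → M), g z = 1 →
      ∏ u, g (ι u) = ∏ k, g k ^ s k := by
  intro d
  induction d with
  | zero =>
    intro s hs
    refine ⟨Fin.elim0, fun g hg => ?_⟩
    have hz : ∀ k ∈ Finset.univ, s k = 0 :=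
      (Finset.sum_eq_zero_iff).mp (Nat.le_zero.mp hs)
    simp only [Finset.univ_eq_empty, Finset.prod_empty]
    exact (Finset.prod_eq_one fun k _ => by rw [hz k (Finset.mem_univ k), pow_zero]).symm
  | succ d ih =>
    intro s hs
    by_cases h0 : ∑ k, s k = 0
    · refine ⟨fun _ => z, fun g hg => ?_⟩
      have hz : ∀ k ∈ Finset.univ, s k = 0 := (Finset.sum_eq_zero_iff).mp h0
      rw [Finset.prod_const, hg, one_pow]
      exact (Finset.prod_eq_one fun k _ => by rw [hz k (Finset.mem_univ k), pow_zero]).symm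
    · obtain ⟨k0, hk0⟩ : ∃ k0, s k0 ≠ 0 := by
        by_contra h; push_neg at h; exact h0 (Finset.sum_eq_zero fun k _ => h k)
      set s' : Fin ℓ → ℕ := Function.update s k0 (s k0 - 1) with hs'
      have hsplit : ∑ k, s k = s k0 + ∑ k ∈ Finset.univ.erase k0, s k :=
        (Finset.add_sum_erase _ s (Finset.mem_univ k0)).symm
      have hsum' : ∑ k, s' k ≤ d := by
        rw [← Finset.add_sum_erase _ s' (Finset.mem_univ k0)]
        have h1 : s' k0 = s k0 - 1 := Function.update_self _ _ _
        have h2 : ∑ k ∈ Finset.univ.erase k0, s' k = ∑ k ∈ Finset.univ.erase k0, s k :=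
          Finset.sum_congr rfl fun k hk =>
            Function.update_of_ne (Finset.ne_of_mem_erase hk) _ _
        rw [h1, h2]; omega
      obtain ⟨ι', hι'⟩ := ih s' hsum'
      refine ⟨Fin.cons k0 ι', fun g hg => ?_⟩
      rw [Fin.prod_univ_succ]
      simp only [Fin.cons_zero, Fin.cons_succ]
      rw [hι' g hg]
      rw [Finset.prod_eq_mul_prod_sdiff_singleton_of_mem (Finset.mem_univ k0) (fun k => g k ^ s k)]
      rw [Finset.prod_eq_mul_prod_sdiff_singleton_of_mem (Finset.mem_univ k0) (fun k => g k ^ s' k)]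
      have h2 : ∀ k ∈ Finset.univ \ {k0}, g k ^ s' k = g k ^ s k := fun k hk => by
        rw [hs', Function.update_of_ne (by simpa using (Finset.mem_sdiff.mp hk).2) _ _]
      have h3 : s' k0 = s k0 - 1 := by rw [hs', Function.update_self]
      rw [Finset.prod_congr rfl h2, h3, ← mul_assoc, ← pow_succ']
      congr 2
      omega

/-- Consistency of cells `b j` with respect to forms `a` and degrees `d`. -/
def Consistent {p ℓ m C : ℕ} (a : Fin m → Fin ℓ → ZMod p)
    (d : Fin C → ℕ) (b : Fin m → Fin C → ZMod p) : Prop :=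
  ∀ lam : Fin C → Fin m → ZMod p,
    (∀ i, ∑ j, lam i j • tpow (p := p) (d i) (a j) = 0) →
    ∀ i, ∑ j, lam i j * b j i = 0

/-- If `f : 𝔽_p^n → [R]` induces the affine constraint `(A,σ)` at some point, then the big
picture function of `f` with respect to a polynomial factor of degrees `d₁,…,d_C < p`
partially `(d₁,…,d_C)`-induces `(A,σ)`: there are consistent cells `b₁,…,b_m` such that each
`σ_j` is attained by `f` inside the cell `b_j`. -/
theorem bigPicture_partially_induces {p n C ℓ m R : ℕ} [Fact p.Prime] (hℓ : 0 < ℓ)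
    (a : Fin m → Fin ℓ → ZMod p) (hcoef1 : ∀ j : Fin m, a j ⟨0, hℓ⟩ = 1)
    (σ : Fin m → Fin R)
    (P : Fin C → MvPolynomial (Fin n) (ZMod p)) (d : Fin C → ℕ)
    (hdeg : ∀ i, (P i).totalDegree ≤ d i) (hdp : ∀ i, d i < p)
    (f : (Fin n → ZMod p) → Fin R)
    (x : Fin ℓ → Fin n → ZMod p)
    (hx : ∀ j : Fin m, f (∑ k, a j k • x k) = σ j) :
    ∃ b : Fin m → Fin C → ZMod p,
      Consistent a d b ∧
      ∀ j : Fin m, ∃ y : Fin n → ZMod p,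
        (∀ i, MvPolynomial.eval y (P i) = b j i) ∧ f y = σ j := by
  classical
  open MvPolynomial in
  set y : Fin m → Fin n → ZMod p := fun j => ∑ k, a j k • x k with hy
  refine ⟨fun j i => MvPolynomial.eval (y j) (P i), ?_, fun j => ⟨y j, fun i => rfl, hx j⟩⟩
  intro lam hlam i
  -- the substituted polynomial in ℓ variables
  set g : Fin n → MvPolynomial (Fin ℓ) (ZMod p) :=
    fun t => ∑ k, MvPolynomial.C (x k t) * MvPolynomial.X k with hg
  set Q : MvPolynomial (Fin ℓ) (ZMod p) := MvPolynomial.eval₂ MvPolynomial.C g (P i) with hQ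
  have hevalQ : ∀ c : Fin ℓ → ZMod p,
      MvPolynomial.eval c Q = MvPolynomial.eval (fun t => ∑ k, x k t * c k) (P i) := by
    intro c
    rw [hQ, MvPolynomial.eval_eval₂]
    have h1 : (MvPolynomial.eval c).comp (MvPolynomial.C (σ := Fin ℓ) (R := ZMod p))
        = RingHom.id (ZMod p) := RingHom.ext fun r => by simp
    rw [h1, MvPolynomial.eval₂_id]
    have h2 : (fun s => MvPolynomial.eval c (g s)) = fun t => ∑ k, x k t * c k := by
      funext t; simp [hg]
    rw [h2]
  have hb : ∀ j, MvPolynomial.eval (a j) Q = MvPolynomial.eval (y j) (P i) := by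
    intro j
    rw [hevalQ]
    have h2 : y j = fun t => ∑ k, x k t * a j k := by
      funext t; simp [hy, Finset.sum_apply, mul_comm]
    rw [h2]
  have hgdeg : ∀ t, (g t).totalDegree ≤ 1 := by
    intro t
    refine MvPolynomial.totalDegree_finsetSum_le fun k _ => ?_
    refine le_trans (MvPolynomial.totalDegree_mul _ _) ?_
    rw [MvPolynomial.totalDegree_C, zero_add]
    exact le_of_eq (MvPolynomial.totalDegree_X k)
  have hdegQ : Q.totalDegree ≤ d i := by
    rw [hQ, MvPolynomial.eval₂_eq]
    refine MvPolynomial.totalDegree_finsetSum_le fun s hs => ?_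
    refine le_trans (MvPolynomial.totalDegree_mul _ _) ?_
    rw [MvPolynomial.totalDegree_C, zero_add]
    refine le_trans (MvPolynomial.totalDegree_finset_prod _ _) ?_
    refine le_trans (Finset.sum_le_sum (fun t (_ : t ∈ s.support) =>
      le_trans (MvPolynomial.totalDegree_pow _ _) (Nat.mul_le_mul_left (s t) (hgdeg t)))) ?_
    simp only [Nat.mul_one]
    exact le_trans (MvPolynomial.le_totalDegree hs) (le_trans (hdeg i) (le_refl _))
  have key : ∀ s : Fin ℓ →₀ ℕ, s ∈ Q.support →
      ∑ j, lam i j * ∏ k, (a j k) ^ (s k) = 0 := by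
    intro s hs
    have hsum : ∑ k, s k ≤ d i := by
      have h1 : ∑ k, s k = ∑ k ∈ s.support, s k :=
        (Finset.sum_subset (Finset.subset_univ _)
          (fun k _ hk => Finsupp.notMem_support_iff.mp hk)).symm
      have h2 : (s.sum fun _ e => e) ≤ Q.totalDegree := MvPolynomial.le_totalDegree hs
      rw [h1]
      exact le_trans h2 hdegQ
    obtain ⟨ι, hι⟩ := exists_pad_tuple ⟨0, hℓ⟩ (d i) (fun k => s k) hsum
    have h2 := congrFun (hlam i) ι
    simp only [Finset.sum_apply, Pi.smul_apply, Pi.zero_apply, smul_eq_mul, tpow] at h2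
    rw [← h2]
    exact Finset.sum_congr rfl fun j _ => by rw [hι (a j) (hcoef1 j)]
  calc ∑ j, lam i j * MvPolynomial.eval (y j) (P i)
      = ∑ j, lam i j * MvPolynomial.eval (a j) Q :=
        Finset.sum_congr rfl fun j _ => by rw [hb j]
    _ = ∑ j, lam i j * ∑ s ∈ Q.support, Q.coeff s * ∏ k, (a j k) ^ (s k) :=
        Finset.sum_congr rfl fun j _ => by rw [MvPolynomial.eval_eq']
    _ = ∑ s ∈ Q.support, Q.coeff s * ∑ j, lam i j * ∏ k, (a j k) ^ (s k) := by
        simp_rw [Finset.mul_sum]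
        rw [Finset.sum_comm]
        exact Finset.sum_congr rfl fun s _ => Finset.sum_congr rfl fun j _ => by ring
    _ = 0 := Finset.sum_eq_zero fun s hs => by rw [key s hs, mul_zero]
end

section
/- Let $X$ be a finite probability space, $\gamma > 0$, $h : \mathbb{N} \to \mathbb{N}$ monotone non-decreasing, and $f : X \to \{0,1\}$. Call a partition $\mathcal{B}$ of $X$ (with complexity $|\mathcal{B}|$, the number of its defining labels) $(h,\gamma)$-robust if no refinement $\mathcal{B}'$ of $\mathcal{B}$ with $|\mathcal{B}'| \leq h(|\mathcal{B}|)$ satisfies $\|\mathbb{E}[f|\mathcal{B}']\|_2^2 \geq \|\mathbb{E}[f|\mathcal{B}]\|_2^2 + \gamma$. Then for any initial partition $\mathcal{B}_0$, there exists a refinement $\mathcal{B}$ of $\mathcal{B}_0$ that is $(h,\gamma)$-robust and satisfies $|\mathcal{B}| \leq k_{\lceil 1/\gamma \rceil}$, where $k_0 = |\mathcal{B}_0|$ and $k_{i+1} = h(k_i) + |\mathcal{B}_0|$. In particular, the iterative process of replacing a non-robust partition by an index-increasing refinement terminates after at most $1/\gamma$ steps, since $0 \leq \|\mathbb{E}[f|\mathcal{P}]\|_2^2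 \leq 1$ for every partition $\mathcal{P}$ and the index is monotone under refinement. -/
open scoped Classical

/-- The density index `‖𝔼[f|B]‖₂²` of the partition of `X` induced by `B : X → Fin k`,
with respect to the uniform measure. -/
noncomputable def indd {X : Type*} [Fintype X] {k : ℕ} (f : X → ℝ) (B : X → Fin k) : ℝ :=
  (∑ x, ((∑ y ∈ Finset.univ.filter (fun y => B y = B x), f y) /
      ((Finset.univ.filter (fun y => B y = B x)).card : ℝ)) ^ 2) / (Fintype.card X : ℝ)

/-- A partition `B` (of complexity `k`) is `(h,γ)`-robust for `f` if no refinement `B'` of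
complexity at most `h k` increases the density index by `γ` or more. -/
def Robust {X : Type*} [Fintype X] {k : ℕ} (f : X → ℝ) (B : X → Fin k)
    (h : ℕ → ℕ) (γ : ℝ) : Prop :=
  ∀ k' : ℕ, k' ≤ h k → ∀ B' : X → Fin k',
    (∀ x y : X, B' x = B' y → B x = B y) → indd f B' < indd f B + γ

lemma indd_nonneg {X : Type*} [Fintype X] {k : ℕ} (f : X → ℝ) (B : X → Fin k) :
    0 ≤ indd f B := by
  unfold indd
  apply div_nonneg
  · exact Finset.sum_nonneg fun x _ => sq_nonneg _
  · exact Nat.cast_nonneg _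

lemma indd_le_one {X : Type*} [Fintype X] [Nonempty X] {k : ℕ} (f : X → ℝ)
    (hf : ∀ x, f x = 0 ∨ f x = 1) (B : X → Fin k) : indd f B ≤ 1 := by
  unfold indd
  rw [div_le_one (by positivity : (0:ℝ) < Fintype.card X)]
  calc ∑ x, ((∑ y ∈ Finset.univ.filter (fun y => B y = B x), f y) /
        ((Finset.univ.filter (fun y => B y = B x)).card : ℝ)) ^ 2
      ≤ ∑ _x : X, (1:ℝ) := by
        apply Finset.sum_le_sum
        intro x _
        have hx : x ∈ Finset.univ.filter (fun y => B y = B x) := by simp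
        have hcard : (0:ℝ) < (Finset.univ.filter (fun y => B y = B x)).card := by
          exact_mod_cast Finset.card_pos.mpr ⟨x, hx⟩
        have h0 : (0:ℝ) ≤ ∑ y ∈ Finset.univ.filter (fun y => B y = B x), f y :=
          Finset.sum_nonneg fun y _ => by rcases hf y with h | h <;> simp [h]
        have h1 : (∑ y ∈ Finset.univ.filter (fun y => B y = B x), f y) ≤
            ((Finset.univ.filter (fun y => B y = B x)).card : ℝ) := by
          calc (∑ y ∈ Finset.univ.filter (fun y => B y = B x), f y)
              ≤ ∑ _y ∈ Finset.univ.filter (fun y => B y = B x), (1:ℝ) := by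
                apply Finset.sum_le_sum
                intro y _
                rcases hf y with h | h <;> simp [h]
            _ = _ := by simp
        have : (∑ y ∈ Finset.univ.filter (fun y => B y = B x), f y) /
            ((Finset.univ.filter (fun y => B y = B x)).card : ℝ) ≤ 1 :=
          (div_le_one hcard).mpr h1
        exact pow_le_one₀ (div_nonneg h0 hcard.le) this
    _ = Fintype.card X := by simp

/-- Existence of robust refinements: for any initial partition `B₀` of complexity `k₀`,
there is a refinement `B` of `B₀` of complexity at most `k_{⌈1/γ⌉}` (where `k_0 = k₀` and
`k_{i+1} = h(k_i) + k₀`) that is `(h,γ)`-robust. -/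
theorem robust_refinement_exists {X : Type*} [Fintype X] [Nonempty X]
    (γ : ℝ) (hγ : 0 < γ) (h : ℕ → ℕ) (hh : Monotone h)
    (f : X → ℝ) (hf : ∀ x, f x = 0 ∨ f x = 1)
    (k₀ : ℕ) (B₀ : X → Fin k₀) :
    ∃ k : ℕ, k ≤ Nat.rec (motive := fun _ => ℕ) k₀ (fun _ kk => h kk + k₀)
        (Nat.ceil (1 / γ)) ∧
      ∃ B : X → Fin k, (∀ x y : X, B x = B y → B₀ x = B₀ y) ∧ Robust f B h γ := by
  set K : ℕ → ℕ := Nat.rec (motive := fun _ => ℕ) k₀ (fun _ kk => h kk + k₀) with hK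
  have hKsucc : ∀ i, K (i + 1) = h (K i) + k₀ := fun i => rfl
  have hKmono : Monotone K := by
    apply monotone_nat_of_le_succ
    intro i
    induction i with
    | zero => exact Nat.le_add_left k₀ (h (K 0))
    | succ n ih =>
      show h (K n) + k₀ ≤ h (K (n + 1)) + k₀
      exact Nat.add_le_add_right (hh ih) k₀
  -- main induction
  have main : ∀ i : ℕ, ∃ k : ℕ, k ≤ K i ∧ ∃ B : X → Fin k,
      (∀ x y : X, B x = B y → B₀ x = B₀ y) ∧
      (Robust f B h γ ∨ (i : ℝ) * γ ≤ indd f B) := by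
    intro i
    induction i with
    | zero => exact ⟨k₀, le_refl _, B₀, fun _ _ hxy => hxy, Or.inr (by
        simpa using indd_nonneg f B₀)⟩
    | succ n ih =>
      obtain ⟨k, hk, B, hBref, hB⟩ := ih
      by_cases hrob : Robust f B h γ
      · exact ⟨k, hk.trans (hKmono (Nat.le_succ n)), B, hBref, Or.inl hrob⟩
      · rcases hB with hrob' | hind
        · exact absurd hrob' hrob
        · simp only [Robust, not_forall] at hrob
          obtain ⟨k', hk', B', hB'ref, hlt⟩ := hrob
          push_neg at hlt
          refine ⟨k', ?_, B', fun x y hxy => hBref x y (hB'ref x y hxy), Or.inr ?_⟩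
          · rw [hKsucc]
            exact le_trans (hk'.trans (hh hk)) (Nat.le_add_right _ _)
          · push_cast
            rw [add_mul, one_mul]
            calc (n : ℝ) * γ + γ ≤ indd f B + γ := add_le_add_left hind γ
              _ ≤ indd f B' := hlt
  obtain ⟨k, hk, B, hBref, hB⟩ := main (Nat.ceil (1 / γ))
  refine ⟨k, hk, B, hBref, ?_⟩
  rcases hB with hrob | hind
  · exact hrob
  · by_contra hrob
    simp only [Robust, not_forall] at hrob
    obtain ⟨k', hk', B', hB'ref, hlt⟩ := hrob
    push_neg at hlt
    have h1 : (1 : ℝ) ≤ indd f B := by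
      calc (1:ℝ) = (1/γ) * γ := by field_simp
        _ ≤ (Nat.ceil (1/γ) : ℝ) * γ := by
            exact mul_le_mul_of_nonneg_right (Nat.le_ceil _) hγ.le
        _ ≤ indd f B := hind
    have h2 : indd f B' ≤ 1 := indd_le_one f hf B'
    linarith
end
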